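/- arXiv:1903.09118 — 3 statements merged into one kernel-verified Lean document; each statement's English description precedes it below -/
import Mathlib

section
/- Let t_k = 2^(1-2^k), let λ > 0, q > 0, and let H : (0,1) → [0,∞) be locally integrable with ∫₀¹ H(x) dx ≤ C₀ ∫₀^{1/2} H(x) dx for some constant C₀. Then ∫₀¹ [(1 - log t)^λ ∫₀ᵗ H(x) dx]^q dt/((1 - log t)·t) is comparable (with constants depending only on λ, q, C₀) to Σ_{k∈ℕ} (∫₀^{t_k} H(x) dx)^q · 2^{λ k q}. -/
open MeasureTheory Set ENNReal

noncomputable def aSeq (k : ℕ) : ℝ := (2:ℝ) ^ (1 - 2 ^ k : ℝ)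

lemma aSeq_pos (k : ℕ) : 0 < aSeq k := Real.rpow_pos_of_pos two_pos _

lemma one_le_two_pow_real (k : ℕ) : (1:ℝ) ≤ 2 ^ k := one_le_pow₀ one_le_two

lemma aSeq_le_one (k : ℕ) : aSeq k ≤ 1 :=
  Real.rpow_le_one_of_one_le_of_nonpos one_le_two (by linarith [one_le_two_pow_real k])

lemma aSeq_strictAnti : StrictAnti aSeq := by
  apply strictAnti_nat_of_succ_lt
  intro n
  apply (Real.rpow_lt_rpow_left_iff one_lt_two).mpr
  have h : (2:ℝ)^n < 2^(n+1) := by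
    rw [pow_succ]; nlinarith [one_le_two_pow_real n]
  linarith

lemma aSeq_succ_lt (k : ℕ) : aSeq (k+1) < aSeq k := aSeq_strictAnti (Nat.lt_succ_self k)

lemma aSeq_zero : aSeq 0 = 1 := by simp [aSeq]

lemma aSeq_one : aSeq 1 = 1/2 := by
  rw [aSeq, show (1 - 2^1 : ℝ) = -1 by norm_num, Real.rpow_neg_one]
  norm_num

lemma log_aSeq (k : ℕ) : Real.log (aSeq k) = (1 - 2^k) * Real.log 2 :=
  Real.log_rpow two_pos _

lemma cover : Ioo (0:ℝ) 1 = ⋃ k : ℕ, Ico (aSeq (k+1)) (aSeq k) := by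
  ext t
  simp only [mem_iUnion, mem_Ioo, mem_Ico]
  constructor
  · rintro ⟨ht0, ht1⟩
    have hlog2 : (0:ℝ) < Real.log 2 := Real.log_pos one_lt_two
    have hex : ∃ n, aSeq n ≤ t := by
      obtain ⟨n, hn⟩ := exists_nat_ge (1 - Real.log t / Real.log 2)
      refine ⟨n, ?_⟩
      have h2n : (n:ℝ) ≤ 2^n := by
        exact_mod_cast (Nat.lt_two_pow_self (n := n)).le
      have hle : Real.log (aSeq n) ≤ Real.log t := by
        rw [log_aSeq]
        rw [← le_div_iff₀ hlog2]
        linarith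
      calc aSeq n = Real.exp (Real.log (aSeq n)) := (Real.exp_log (aSeq_pos n)).symm
        _ ≤ Real.exp (Real.log t) := Real.exp_le_exp.mpr hle
        _ = t := Real.exp_log ht0
    have hk0 : Nat.find hex ≠ 0 := by
      intro h0
      have := Nat.find_spec hex
      rw [h0, aSeq_zero] at this
      linarith
    obtain ⟨m, hm⟩ := Nat.exists_eq_succ_of_ne_zero hk0
    refine ⟨m, ?_, ?_⟩
    · have := Nat.find_spec hex; rwa [hm] at this
    · have := Nat.find_min hex (by omega : m < Nat.find hex)
      exact lt_of_not_ge this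
  · rintro ⟨k, h1, h2⟩
    exact ⟨lt_of_lt_of_le (aSeq_pos (k+1)) h1, lt_of_lt_of_le h2 (aSeq_le_one k)⟩

lemma cover_disjoint :
    Pairwise (Function.onFun Disjoint fun k : ℕ => Ico (aSeq (k+1)) (aSeq k)) := by
  have key : ∀ i j : ℕ, i < j →
      Disjoint (Ico (aSeq (i+1)) (aSeq i)) (Ico (aSeq (j+1)) (aSeq j)) := by
    intro i j h
    apply Set.disjoint_left.mpr
    rintro x ⟨hx1, _⟩ ⟨_, hy2⟩
    have : aSeq j ≤ aSeq (i+1) := aSeq_strictAnti.antitone (by omega)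
    linarith
  intro i j hij
  rcases lt_or_gt_of_ne hij with h | h
  · exact key i j h
  · exact (key j i h).symm

open intervalIntegral in
lemma lint_inv {x y : ℝ} (hx : 0 < x) (hxy : x ≤ y) :
    ∫⁻ t in Ico x y, ENNReal.ofReal t⁻¹ = ENNReal.ofReal (Real.log y - Real.log x) := by
  have hy : 0 < y := lt_of_lt_of_le hx hxy
  have hne : (0:ℝ) ∉ Set.uIcc x y := by
    rw [Set.uIcc_of_le hxy]
    intro h
    exact absurd h.1 (not_le.mpr hx)
  have hInt : IntervalIntegrable (fun t : ℝ => t⁻¹) volume x y := by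
    simpa using intervalIntegrable_inv (μ := volume) (f := fun t : ℝ => t)
      (fun z hz => by rw [Set.uIcc_of_le hxy] at hz; exact ne_of_gt (lt_of_lt_of_le hx hz.1))
      continuousOn_id
  have hIoc : IntegrableOn (fun t : ℝ => t⁻¹) (Ioc x y) volume := hInt.1
  rw [setLIntegral_congr Ico_ae_eq_Ioc,
      ← ofReal_integral_eq_lintegral_ofReal hIoc
        (ae_restrict_of_forall_mem measurableSet_Ioc
          (fun t ht => inv_nonneg.mpr (le_of_lt (lt_trans hx ht.1))))]
  congr 1
  rw [← integral_of_le hxy, integral_inv hne,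
      Real.log_div (ne_of_gt hy) (ne_of_gt hx)]

lemma log_bounds (k : ℕ) {t : ℝ} (h1 : aSeq (k+1) ≤ t) (h2 : t < aSeq k) :
    (2:ℝ)^k / 2 ≤ 1 - Real.log t ∧ 1 - Real.log t ≤ 4 * 2^k := by
  have ht0 : 0 < t := lt_of_lt_of_le (aSeq_pos (k+1)) h1
  have hl : Real.log t < Real.log (aSeq k) := Real.log_lt_log ht0 h2
  have hr : Real.log (aSeq (k+1)) ≤ Real.log t := Real.log_le_log (aSeq_pos (k+1)) h1
  rw [log_aSeq] at hl
  rw [log_aSeq, pow_succ] at hr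
  constructor <;>
    nlinarith [Real.log_two_gt_d9, Real.log_two_lt_d9, one_le_two_pow_real k]
set_option maxHeartbeats 1000000 in
/-- With `t_k = 2^(1-2^k)`, `λ > 0`, `q > 0`, for `H : (0,1) → [0,∞)` locally integrable
with `∫₀¹ H ≤ C₀ ∫₀^{1/2} H`, the quantity
`∫₀¹ [(1 - log t)^λ ∫₀ᵗ H]^q dt/((1-log t) t)` is comparable (constants depending only on
`λ, q, C₀`) to `∑ₖ (∫₀^{t_k} H)^q 2^{λkq}`. -/
theorem stmt_3 (lam q C₀ : ℝ) (hlam : 0 < lam) (hq : 0 < q) :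
    ∃ C : ℝ≥0∞, 0 < C ∧ C ≠ ⊤ ∧
      ∀ H : ℝ → ℝ≥0∞, Measurable H →
        (∫⁻ x in Ioo (0:ℝ) 1, H x) ≤ ENNReal.ofReal C₀ * ∫⁻ x in Ioo (0:ℝ) (1/2), H x →
        ((∫⁻ t in Ioo (0:ℝ) 1,
            (ENNReal.ofReal ((1 - Real.log t) ^ lam) * ∫⁻ x in Ioo (0:ℝ) t, H x) ^ q *
              ENNReal.ofReal (((1 - Real.log t) * t)⁻¹)) ≤
            C * ∑' k : ℕ, (∫⁻ x in Ioo (0:ℝ) ((2:ℝ) ^ (1 - 2 ^ k : ℝ)), H x) ^ q *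
              ENNReal.ofReal ((2:ℝ) ^ (lam * k * q))) ∧
        ((∑' k : ℕ, (∫⁻ x in Ioo (0:ℝ) ((2:ℝ) ^ (1 - 2 ^ k : ℝ)), H x) ^ q *
              ENNReal.ofReal ((2:ℝ) ^ (lam * k * q))) ≤
            C * ∫⁻ t in Ioo (0:ℝ) 1,
              (ENNReal.ofReal ((1 - Real.log t) ^ lam) * ∫⁻ x in Ioo (0:ℝ) t, H x) ^ q *
                ENNReal.ofReal (((1 - Real.log t) * t)⁻¹)) := by
  have hlog2a := Real.log_two_gt_d9
  have hlog2b := Real.log_two_lt_d9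
  set D : ℝ≥0∞ := ENNReal.ofReal (8 * (2:ℝ)^(lam*q) * (2:ℝ)^(lam*q)) with hD
  set c1 : ℝ≥0∞ := ENNReal.ofReal ((4:ℝ)^(lam*q) * 2) with hc1
  set c2 : ℝ≥0∞ := (ENNReal.ofReal C₀ ^ q + 1) * D with hc2
  have hgm : Measurable fun t : ℝ => ENNReal.ofReal t⁻¹ :=
    ENNReal.measurable_ofReal.comp measurable_inv
  refine ⟨c1 + c2, ?_, ?_, ?_⟩
  · have h : 0 < c1 := ENNReal.ofReal_pos.mpr (by positivity)
    exact lt_of_lt_of_le h le_self_add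
  · refine ENNReal.add_ne_top.mpr ⟨ENNReal.ofReal_ne_top, ?_⟩
    exact ENNReal.mul_ne_top
      (ENNReal.add_ne_top.mpr
        ⟨ENNReal.rpow_ne_top_of_nonneg hq.le ENNReal.ofReal_ne_top, ENNReal.one_ne_top⟩)
      ENNReal.ofReal_ne_top
  intro H hH hC
  have haS : ∀ k : ℕ, ((2:ℝ) ^ (1 - 2 ^ k : ℝ)) = aSeq k := fun _ => rfl
  simp only [haS]
  set F : ℝ → ℝ≥0∞ := fun t =>
    (ENNReal.ofReal ((1 - Real.log t) ^ lam) * ∫⁻ x in Ioo (0:ℝ) t, H x) ^ q *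
      ENNReal.ofReal (((1 - Real.log t) * t)⁻¹) with hF
  set G : ℕ → ℝ≥0∞ := fun k =>
    (∫⁻ x in Ioo (0:ℝ) (aSeq k), H x) ^ q * ENNReal.ofReal ((2:ℝ) ^ (lam * k * q)) with hG
  have hsplit : (∫⁻ t in Ioo (0:ℝ) 1, F t)
      = ∑' k : ℕ, ∫⁻ t in Ico (aSeq (k+1)) (aSeq k), F t := by
    rw [cover]
    exact lintegral_iUnion (fun _ => measurableSet_Ico) cover_disjoint _
  have key_up : ∀ k : ℕ, (∫⁻ t in Ico (aSeq (k+1)) (aSeq k), F t) ≤ c1 * G k := by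
    intro k
    have hp0 : (0:ℝ) < 2^k := by positivity
    have hp1 : (1:ℝ) ≤ 2^k := one_le_two_pow_real k
    have hpt : ∀ t ∈ Ico (aSeq (k+1)) (aSeq k),
        F t ≤ (ENNReal.ofReal ((4*2^k)^lam) * ∫⁻ x in Ioo (0:ℝ) (aSeq k), H x) ^ q *
          (ENNReal.ofReal (2/2^k) * ENNReal.ofReal t⁻¹) := by
      rintro t ⟨ht1, ht2⟩
      have ht0 : 0 < t := lt_of_lt_of_le (aSeq_pos (k+1)) ht1
      obtain ⟨hb1, hb2⟩ := log_bounds k ht1 ht2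
      have hlt0 : 0 < 1 - Real.log t := by nlinarith
      rw [hF]
      refine mul_le_mul' ?_ ?_
      · refine ENNReal.rpow_le_rpow (mul_le_mul' (ENNReal.ofReal_le_ofReal ?_)
          (lintegral_mono_set (Ioo_subset_Ioo le_rfl ht2.le))) hq.le
        exact Real.rpow_le_rpow hlt0.le (by linarith) hlam.le
      · rw [← ENNReal.ofReal_mul (by positivity)]
        apply ENNReal.ofReal_le_ofReal
        have e : 2/2^k * t⁻¹ = ((2^k/2) * t)⁻¹ := by
          rw [mul_inv, inv_div]
        rw [e, ← one_div, ← one_div]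
        exact one_div_le_one_div_of_le (by positivity)
          (mul_le_mul_of_nonneg_right hb1 ht0.le)
    have hlogdiff : Real.log (aSeq k) - Real.log (aSeq (k+1)) = 2^k * Real.log 2 := by
      rw [log_aSeq, log_aSeq, pow_succ]; ring
    calc (∫⁻ t in Ico (aSeq (k+1)) (aSeq k), F t)
        ≤ ∫⁻ t in Ico (aSeq (k+1)) (aSeq k),
            (ENNReal.ofReal ((4*2^k)^lam) * ∫⁻ x in Ioo (0:ℝ) (aSeq k), H x) ^ q *
              (ENNReal.ofReal (2/2^k) * ENNReal.ofReal t⁻¹) :=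
          setLIntegral_mono' measurableSet_Ico hpt
      _ = (ENNReal.ofReal ((4*2^k)^lam) * ∫⁻ x in Ioo (0:ℝ) (aSeq k), H x) ^ q *
            ENNReal.ofReal (2/2^k) * ENNReal.ofReal (2^k * Real.log 2) := by
          simp_rw [← mul_assoc]
          rw [lintegral_const_mul _ hgm, lint_inv (aSeq_pos (k+1)) (aSeq_succ_lt k).le,
            hlogdiff]
      _ ≤ c1 * G k := ?_
    have hsplit2 : (ENNReal.ofReal ((4*2^k)^lam) * ∫⁻ x in Ioo (0:ℝ) (aSeq k), H x) ^ q *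
            ENNReal.ofReal (2/2^k) * ENNReal.ofReal (2^k * Real.log 2)
        = ENNReal.ofReal (((4*2^k)^lam)^q * ((2/2^k) * (2^k * Real.log 2))) *
            (∫⁻ x in Ioo (0:ℝ) (aSeq k), H x) ^ q := by
      rw [ENNReal.mul_rpow_of_nonneg _ _ hq.le,
        ENNReal.ofReal_rpow_of_pos (show (0:ℝ) < (4*2^k:ℝ)^lam by positivity),
        ENNReal.ofReal_mul (show (0:ℝ) ≤ ((4*2^k:ℝ)^lam)^q by positivity),
        ENNReal.ofReal_mul (show (0:ℝ) ≤ 2/(2:ℝ)^k by positivity)]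
      ring
    have hreal : ((4*2^k)^lam)^q * ((2/2^k) * (2^k * Real.log 2))
        ≤ (4:ℝ)^(lam*q) * 2 * (2:ℝ)^(lam * (k:ℝ) * q) := by
      have h1 : (((4*2^k:ℝ))^lam)^q = (4:ℝ)^(lam*q) * ((2:ℝ)^k)^(lam*q) := by
        rw [← Real.rpow_mul (by positivity : (0:ℝ) ≤ 4*2^k),
            Real.mul_rpow (by norm_num : (0:ℝ) ≤ 4) hp0.le]
      have h2 : ((2:ℝ)^k)^(lam*q) = (2:ℝ)^(lam * (k:ℝ) * q) := by
        rw [← Real.rpow_natCast 2 k, ← Real.rpow_mul (by norm_num : (0:ℝ) ≤ 2)]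
        congr 1; ring
      have h3 : (2/2^k) * ((2:ℝ)^k * Real.log 2) = 2 * Real.log 2 := by
        field_simp
      rw [h1, h2, h3]
      nlinarith [mul_pos (Real.rpow_pos_of_pos (show (0:ℝ) < 4 by norm_num) (lam*q))
        (Real.rpow_pos_of_pos two_pos (lam * (k:ℝ) * q)), hlog2b]
    rw [hsplit2]
    calc ENNReal.ofReal (((4*2^k)^lam)^q * ((2/2^k) * (2^k * Real.log 2))) *
            (∫⁻ x in Ioo (0:ℝ) (aSeq k), H x) ^ q
        ≤ ENNReal.ofReal ((4:ℝ)^(lam*q) * 2 * (2:ℝ)^(lam * (k:ℝ) * q)) *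
            (∫⁻ x in Ioo (0:ℝ) (aSeq k), H x) ^ q :=
          mul_le_mul_left (ENNReal.ofReal_le_ofReal hreal) _
      _ = c1 * G k := by
          simp only [hG, hc1]
          rw [ENNReal.ofReal_mul (show (0:ℝ) ≤ (4:ℝ)^(lam*q)*2 by positivity)]
          ring
  have key_lo : ∀ k : ℕ, G (k+1) ≤ D * ∫⁻ t in Ico (aSeq (k+1)) (aSeq k), F t := by
    intro k
    have hp0 : (0:ℝ) < 2^k := by positivity
    have hp1 : (1:ℝ) ≤ 2^k := one_le_two_pow_real k
    have hpt : ∀ t ∈ Ico (aSeq (k+1)) (aSeq k),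
        (ENNReal.ofReal ((2^k/2)^lam) * ∫⁻ x in Ioo (0:ℝ) (aSeq (k+1)), H x) ^ q *
          (ENNReal.ofReal ((4*2^k)⁻¹) * ENNReal.ofReal t⁻¹) ≤ F t := by
      rintro t ⟨ht1, ht2⟩
      have ht0 : 0 < t := lt_of_lt_of_le (aSeq_pos (k+1)) ht1
      obtain ⟨hb1, hb2⟩ := log_bounds k ht1 ht2
      have hlt0 : 0 < 1 - Real.log t := by nlinarith
      rw [hF]
      refine mul_le_mul' ?_ ?_
      · refine ENNReal.rpow_le_rpow (mul_le_mul' (ENNReal.ofReal_le_ofReal ?_)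
          (lintegral_mono_set (Ioo_subset_Ioo le_rfl ht1))) hq.le
        exact Real.rpow_le_rpow (by positivity) hb1 hlam.le
      · rw [← ENNReal.ofReal_mul (by positivity)]
        apply ENNReal.ofReal_le_ofReal
        have e : ((4*2^k)⁻¹ : ℝ) * t⁻¹ = ((4*2^k) * t)⁻¹ := (mul_inv _ _).symm
        rw [e, ← one_div, ← one_div]
        exact one_div_le_one_div_of_le (by positivity)
          (mul_le_mul_of_nonneg_right hb2 ht0.le)
    have hlogdiff : Real.log (aSeq k) - Real.log (aSeq (k+1)) = 2^k * Real.log 2 := by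
      rw [log_aSeq, log_aSeq, pow_succ]; ring
    have hconst : (∫⁻ t in Ico (aSeq (k+1)) (aSeq k),
          (ENNReal.ofReal ((2^k/2)^lam) * ∫⁻ x in Ioo (0:ℝ) (aSeq (k+1)), H x) ^ q *
            (ENNReal.ofReal ((4*2^k)⁻¹) * ENNReal.ofReal t⁻¹))
        = (ENNReal.ofReal ((2^k/2)^lam) * ∫⁻ x in Ioo (0:ℝ) (aSeq (k+1)), H x) ^ q *
            ENNReal.ofReal ((4*2^k)⁻¹) * ENNReal.ofReal (2^k * Real.log 2) := by
      simp_rw [← mul_assoc]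
      rw [lintegral_const_mul _ hgm, lint_inv (aSeq_pos (k+1)) (aSeq_succ_lt k).le, hlogdiff]
    have hstep : (ENNReal.ofReal ((2^k/2)^lam) * ∫⁻ x in Ioo (0:ℝ) (aSeq (k+1)), H x) ^ q *
          ENNReal.ofReal ((4*2^k)⁻¹) * ENNReal.ofReal (2^k * Real.log 2)
        ≤ ∫⁻ t in Ico (aSeq (k+1)) (aSeq k), F t := by
      rw [← hconst]
      exact setLIntegral_mono' measurableSet_Ico hpt
    have hreal2 : (2:ℝ)^(lam * ((k:ℝ)+1) * q)
        ≤ 8*(2:ℝ)^(lam*q)*(2:ℝ)^(lam*q) *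
            ((((2:ℝ)^k/2)^lam)^q * (((4*(2:ℝ)^k)⁻¹) * ((2:ℝ)^k * Real.log 2))) := by
      have h1 : (((2:ℝ)^k/2)^lam)^q = ((2:ℝ)^k/2)^(lam*q) :=
        (Real.rpow_mul (by positivity) lam q).symm
      have h2 : ((2:ℝ)^k/2)^(lam*q) * (2:ℝ)^(lam*q) = ((2:ℝ)^k)^(lam*q) := by
        rw [← Real.mul_rpow (by positivity) (by norm_num : (0:ℝ) ≤ 2)]
        norm_num
      have h3 : ((2:ℝ)^k)^(lam*q) = (2:ℝ)^(lam * (k:ℝ) * q) := by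
        rw [← Real.rpow_natCast 2 k, ← Real.rpow_mul (by norm_num : (0:ℝ) ≤ 2)]
        congr 1; ring
      have h4 : (2:ℝ)^(lam * ((k:ℝ)+1) * q) = (2:ℝ)^(lam*q) * (2:ℝ)^(lam * (k:ℝ) * q) := by
        rw [← Real.rpow_add two_pos]; congr 1; ring
      have h5 : ((4*(2:ℝ)^k)⁻¹) * ((2:ℝ)^k * Real.log 2) = Real.log 2 / 4 := by
        field_simp
      rw [h4, h1, h5, ← h3, ← h2]
      nlinarith [mul_pos (mul_pos (Real.rpow_pos_of_pos two_pos (lam*q))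
          (Real.rpow_pos_of_pos two_pos (lam*q)))
          (Real.rpow_pos_of_pos (show (0:ℝ) < 2^k/2 by positivity) (lam*q)), hlog2a]
    calc G (k+1)
        = (∫⁻ x in Ioo (0:ℝ) (aSeq (k+1)), H x) ^ q *
            ENNReal.ofReal ((2:ℝ)^(lam * ((k:ℝ)+1) * q)) := by
          simp only [hG, Nat.cast_add, Nat.cast_one]
      _ ≤ (∫⁻ x in Ioo (0:ℝ) (aSeq (k+1)), H x) ^ q *
            ENNReal.ofReal (8*(2:ℝ)^(lam*q)*(2:ℝ)^(lam*q) *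
              ((((2:ℝ)^k/2)^lam)^q * (((4*(2:ℝ)^k)⁻¹) * ((2:ℝ)^k * Real.log 2)))) :=
          mul_le_mul_right (ENNReal.ofReal_le_ofReal hreal2) _
      _ = D * ((ENNReal.ofReal ((2^k/2)^lam) * ∫⁻ x in Ioo (0:ℝ) (aSeq (k+1)), H x) ^ q *
            ENNReal.ofReal ((4*2^k)⁻¹) * ENNReal.ofReal (2^k * Real.log 2)) := by
          rw [hD, ENNReal.mul_rpow_of_nonneg _ _ hq.le,
            ENNReal.ofReal_rpow_of_pos (show (0:ℝ) < ((2:ℝ)^k/2)^lam by positivity),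
            ENNReal.ofReal_mul (show (0:ℝ) ≤ 8*(2:ℝ)^(lam*q)*(2:ℝ)^(lam*q) by positivity),
            ENNReal.ofReal_mul (show (0:ℝ) ≤ (((2:ℝ)^k/2)^lam)^q by positivity),
            ENNReal.ofReal_mul (show (0:ℝ) ≤ (4*(2:ℝ)^k)⁻¹ by positivity)]
          ring
      _ ≤ D * ∫⁻ t in Ico (aSeq (k+1)) (aSeq k), F t := mul_le_mul_right hstep _
  constructor
  · calc (∫⁻ t in Ioo (0:ℝ) 1, F t)
        = ∑' k : ℕ, ∫⁻ t in Ico (aSeq (k+1)) (aSeq k), F t := hsplit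
      _ ≤ ∑' k : ℕ, c1 * G k := ENNReal.tsum_le_tsum key_up
      _ = c1 * ∑' k : ℕ, G k := ENNReal.tsum_mul_left
      _ ≤ (c1 + c2) * ∑' k : ℕ, G k := mul_le_mul_left le_self_add _
  · have htail : (∑' k : ℕ, G (k+1)) ≤ D * ∫⁻ t in Ioo (0:ℝ) 1, F t := by
      calc (∑' k : ℕ, G (k+1))
          ≤ ∑' k : ℕ, D * ∫⁻ t in Ico (aSeq (k+1)) (aSeq k), F t :=
            ENNReal.tsum_le_tsum key_lo
        _ = D * ∑' k : ℕ, ∫⁻ t in Ico (aSeq (k+1)) (aSeq k), F t := ENNReal.tsum_mul_left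
        _ = D * ∫⁻ t in Ioo (0:ℝ) 1, F t := by rw [← hsplit]
    have hG0 : G 0 ≤ ENNReal.ofReal C₀ ^ q * ∑' k : ℕ, G (k+1) := by
      have h10 : G 0 = (∫⁻ x in Ioo (0:ℝ) 1, H x) ^ q := by
        rw [hG]; simp [aSeq_zero]
      have hcc : (∫⁻ x in Ioo (0:ℝ) 1, H x) ^ q
          ≤ ENNReal.ofReal C₀ ^ q * (∫⁻ x in Ioo (0:ℝ) (aSeq 1), H x) ^ q := by
        rw [← ENNReal.mul_rpow_of_nonneg _ _ hq.le]
        apply ENNReal.rpow_le_rpow _ hq.le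
        rw [aSeq_one]; exact hC
      have h1le : (∫⁻ x in Ioo (0:ℝ) (aSeq 1), H x) ^ q ≤ G 1 := by
        rw [hG]
        have hone : (1:ℝ≥0∞) ≤ ENNReal.ofReal ((2:ℝ) ^ (lam * (1:ℕ) * q)) := by
          rw [ENNReal.one_le_ofReal]
          have h := Real.rpow_le_rpow_of_exponent_le one_le_two
            (show (0:ℝ) ≤ lam * (1:ℕ) * q by positivity)
          simpa using h
        calc (∫⁻ x in Ioo (0:ℝ) (aSeq 1), H x) ^ q
            = (∫⁻ x in Ioo (0:ℝ) (aSeq 1), H x) ^ q * 1 := (mul_one _).symm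
          _ ≤ (∫⁻ x in Ioo (0:ℝ) (aSeq 1), H x) ^ q *
              ENNReal.ofReal ((2:ℝ) ^ (lam * (1:ℕ) * q)) := mul_le_mul_right hone _
      have hG1 : G 1 ≤ ∑' k : ℕ, G (k+1) := ENNReal.le_tsum 0
      calc G 0 = (∫⁻ x in Ioo (0:ℝ) 1, H x) ^ q := h10
        _ ≤ ENNReal.ofReal C₀ ^ q * (∫⁻ x in Ioo (0:ℝ) (aSeq 1), H x) ^ q := hcc
        _ ≤ ENNReal.ofReal C₀ ^ q * G 1 := mul_le_mul_right h1le _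
        _ ≤ ENNReal.ofReal C₀ ^ q * ∑' k : ℕ, G (k+1) := mul_le_mul_right hG1 _
    calc (∑' k : ℕ, G k) = G 0 + ∑' k : ℕ, G (k+1) := tsum_eq_zero_add' ENNReal.summable
      _ ≤ ENNReal.ofReal C₀ ^ q * (∑' k : ℕ, G (k+1)) + 1 * ∑' k : ℕ, G (k+1) :=
          add_le_add hG0 (by rw [one_mul])
      _ = (ENNReal.ofReal C₀ ^ q + 1) * ∑' k : ℕ, G (k+1) := by ring
      _ ≤ (ENNReal.ofReal C₀ ^ q + 1) * (D * ∫⁻ t in Ioo (0:ℝ) 1, F t) :=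
          mul_le_mul_right htail _
      _ = c2 * ∫⁻ t in Ioo (0:ℝ) 1, F t := by rw [hc2]; ring
      _ ≤ (c1 + c2) * ∫⁻ t in Ioo (0:ℝ) 1, F t := mul_le_mul_left le_add_self _
end

section
/- Let λ > 0, q > 0, and let H : (0,1) → [0,∞) be locally integrable with ∫₀¹ H ≤ C₀ ∫₀^{1/2} H. With t_k = 2^(1-2^k), the sum Σ_{k∈ℕ} (∫₀^{t_k} H(x) dx)^q · 2^{λkq} is comparable to Σ_{k∈ℕ} (2^{λk} ∫_{t_{k+1}}^{t_k} H(x) dx)^q, with constants depending only on λ, q, C₀. -/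
open MeasureTheory Set ENNReal

namespace Stmt4Aux

noncomputable def tt (k : ℕ) : ℝ := (2:ℝ) ^ (1 - 2 ^ k : ℝ)

lemma tt_pos (k : ℕ) : 0 < tt k := Real.rpow_pos_of_pos two_pos _

lemma tt_anti : StrictAnti tt := by
  intro a b hab
  apply (Real.rpow_lt_rpow_left_iff (by norm_num : (1:ℝ) < 2)).2
  have : (2:ℝ) ^ a < 2 ^ b := pow_lt_pow_right₀ one_lt_two hab
  linarith

lemma tt_small {x : ℝ} (hx : 0 < x) : ∃ n, tt n ≤ x := by
  obtain ⟨n, hn⟩ := exists_pow_lt_of_lt_one (by positivity : (0:ℝ) < x / 2)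
    (by norm_num : (1/2 : ℝ) < 1)
  refine ⟨n, ?_⟩
  have h1 : tt n ≤ (2:ℝ) ^ (1 - (n:ℝ)) := by
    apply Real.rpow_le_rpow_of_exponent_le one_le_two
    have : (n:ℝ) ≤ 2 ^ n := by
      exact_mod_cast (Nat.lt_two_pow_self (n := n)).le
    linarith
  have h2 : (2:ℝ) ^ (1 - (n:ℝ)) = 2 * (1/2) ^ n := by
    rw [Real.rpow_sub two_pos, Real.rpow_one, Real.rpow_natCast]
    rw [div_eq_mul_inv, one_div, inv_pow]
  rw [h2] at h1
  nlinarith [pow_nonneg (by norm_num : (0:ℝ) ≤ 1/2) n]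

lemma iUnion_Ico (k : ℕ) :
    (⋃ j : ℕ, Ico (tt (k + j + 1)) (tt (k + j))) = Ioo 0 (tt k) := by
  ext x
  simp only [mem_iUnion, mem_Ico, mem_Ioo]
  constructor
  · rintro ⟨j, h1, h2⟩
    refine ⟨lt_of_lt_of_le (tt_pos _) h1, lt_of_lt_of_le h2 ?_⟩
    exact tt_anti.antitone (Nat.le_add_right k j)
  · rintro ⟨hx0, hxk⟩
    obtain ⟨n, hn⟩ := tt_small hx0
    have hkn : k < n := by
      by_contra h
      exact absurd (hn.trans_lt hxk) (not_lt.2 (tt_anti.antitone (not_lt.1 h)))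
    have hP : ∃ m, tt (k + m + 1) ≤ x := by
      obtain ⟨m, rfl⟩ := Nat.exists_eq_add_of_lt hkn
      exact ⟨m, hn⟩
    classical
    set m := Nat.find hP with hmdef
    refine ⟨m, Nat.find_spec hP, ?_⟩
    rcases Nat.eq_zero_or_pos m with hm | hm
    · rw [hm, Nat.add_zero]; exact hxk
    · have hlt : m - 1 < Nat.find hP := by omega
      have hnot := Nat.find_min hP hlt
      rw [not_le] at hnot
      have heq : k + (m - 1) + 1 = k + m := by omega
      rwa [heq] at hnot

lemma pairwise_disj (k : ℕ) :
    Pairwise (Function.onFun Disjoint fun j : ℕ => Ico (tt (k + j + 1)) (tt (k + j))) := by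
  have key : ∀ i j : ℕ, i < j →
      Disjoint (Ico (tt (k + i + 1)) (tt (k + i))) (Ico (tt (k + j + 1)) (tt (k + j))) := by
    intro i j hij
    apply Set.disjoint_left.2
    rintro x ⟨h1, _⟩ ⟨_, h4⟩
    have : tt (k + j) ≤ tt (k + i + 1) := tt_anti.antitone (by omega)
    linarith
  intro i j hij
  rcases lt_or_gt_of_ne hij with h | h
  · exact key i j h
  · exact (key j i h).symm

lemma integral_split {H : ℝ → ℝ≥0∞} (hH : Measurable H) (k : ℕ) :
    ∫⁻ x in Ioo 0 (tt k), H x = ∑' j : ℕ, ∫⁻ x in Ioo (tt (k + j + 1)) (tt (k + j)), H x := by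
  rw [← iUnion_Ico k, lintegral_iUnion (fun j => measurableSet_Ico) (pairwise_disj k)]
  congr 1
  ext j
  exact (setLIntegral_congr Ioo_ae_eq_Ico).symm

lemma finset_rpow_le {q : ℝ} (hq : 0 < q) (hq1 : q ≤ 1) (s : Finset ℕ) (x : ℕ → ℝ≥0∞) :
    (∑ i ∈ s, x i) ^ q ≤ ∑ i ∈ s, x i ^ q := by
  classical
  induction s using Finset.induction with
  | empty => simp [ENNReal.zero_rpow_of_pos hq]
  | insert a s h ih =>
      rw [Finset.sum_insert h, Finset.sum_insert h]
      exact le_trans (ENNReal.rpow_add_le_add_rpow _ _ hq.le hq1) (by gcongr)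

lemma tsum_rpow_le {q : ℝ} (hq : 0 < q) (hq1 : q ≤ 1) (x : ℕ → ℝ≥0∞) :
    (∑' j, x j) ^ q ≤ ∑' j, x j ^ q := by
  have hle : ∑' j, x j ≤ (∑' j, x j ^ q) ^ (1 / q) := by
    refine Summable.tsum_le_of_sum_le ENNReal.summable ?_
    intro s
    have h1 := finset_rpow_le hq hq1 s x
    have h2 : ∑ i ∈ s, x i ^ q ≤ ∑' j, x j ^ q := ENNReal.sum_le_tsum s
    calc ∑ i ∈ s, x i = ((∑ i ∈ s, x i) ^ q) ^ (1/q) := by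
          rw [one_div, ENNReal.rpow_rpow_inv hq.ne']
      _ ≤ (∑' j, x j ^ q) ^ (1/q) := ENNReal.rpow_le_rpow (h1.trans h2) (by positivity)
  calc (∑' j, x j) ^ q ≤ ((∑' j, x j ^ q) ^ (1/q)) ^ q := ENNReal.rpow_le_rpow hle hq.le
    _ = _ := by rw [one_div, ENNReal.rpow_inv_rpow hq.ne']

lemma geom_ne_top {r : ℝ} (hr : r < 0) :
    (∑' j : ℕ, ENNReal.ofReal ((2:ℝ) ^ (r * j))) ≠ ⊤ := by
  have h2 : ∀ j : ℕ, ENNReal.ofReal ((2:ℝ) ^ (r * j)) = ENNReal.ofReal ((2:ℝ) ^ r) ^ j := by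
    intro j
    rw [← ENNReal.ofReal_pow (Real.rpow_nonneg (by norm_num) r)]
    congr 1
    rw [← Real.rpow_natCast ((2:ℝ) ^ r) j, ← Real.rpow_mul (by norm_num)]
  simp_rw [h2]
  rw [ENNReal.tsum_geometric]
  have hz : ENNReal.ofReal ((2:ℝ) ^ r) < 1 := by
    rw [← ENNReal.ofReal_one]
    exact ENNReal.ofReal_lt_ofReal_iff_of_nonneg (Real.rpow_nonneg (by norm_num) r) |>.2
      (Real.rpow_lt_one_of_one_lt_of_neg one_lt_two hr)
  refine ENNReal.inv_ne_top.2 ?_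
  rw [Ne, tsub_eq_zero_iff_le, not_le]
  exact hz

lemma ofReal_two_rpow_add (s t : ℝ) :
    ENNReal.ofReal ((2:ℝ) ^ (s + t)) = ENNReal.ofReal ((2:ℝ) ^ s) * ENNReal.ofReal ((2:ℝ) ^ t) := by
  rw [Real.rpow_add two_pos, ENNReal.ofReal_mul (Real.rpow_nonneg (by norm_num) s)]

lemma key_sum (δ q : ℝ) (hδ : 0 < δ) (hq : 0 < q) :
    ∃ A : ℝ≥0∞, A ≠ ⊤ ∧ ∀ x : ℕ → ℝ≥0∞,
      (∑' j, x j) ^ q ≤ A * ∑' j : ℕ, ENNReal.ofReal ((2:ℝ) ^ (δ * j * q)) * x j ^ q := by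
  rcases le_or_gt q 1 with hq1 | hq1
  · refine ⟨1, one_ne_top, fun x => ?_⟩
    rw [one_mul]
    refine (tsum_rpow_le hq hq1 x).trans (ENNReal.tsum_le_tsum fun j => ?_)
    conv_lhs => rw [← one_mul (x j ^ q)]
    gcongr
    rw [← ENNReal.ofReal_one]
    exact ENNReal.ofReal_le_ofReal (Real.one_le_rpow one_le_two (by positivity))
  · set p : ℝ := q / (q - 1) with hp
    have hq0 : q ≠ 0 := hq.ne'
    have hq1' : q - 1 ≠ 0 := by intro h; nlinarith
    have hpq : p.HolderConjugate q := (Real.HolderConjugate.conjExponent hq1).symm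
    have hppos : 0 < p := hpq.pos
    set B : ℝ≥0∞ := ∑' j : ℕ, ENNReal.ofReal ((2:ℝ) ^ ((-δ * p) * j)) with hB
    have hBne : B ≠ ⊤ := geom_ne_top (by nlinarith)
    refine ⟨B ^ (q / p), ENNReal.rpow_ne_top_of_nonneg (by positivity) hBne, fun x => ?_⟩
    set f : ℕ → ℝ≥0∞ := fun j => ENNReal.ofReal ((2:ℝ) ^ (-δ * j)) with hf
    set g : ℕ → ℝ≥0∞ := fun j => ENNReal.ofReal ((2:ℝ) ^ (δ * j)) * x j with hg
    have hfg : ∀ j, x j = f j * g j := by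
      intro j
      rw [hf, hg]
      simp only
      rw [← mul_assoc, ← ofReal_two_rpow_add]
      norm_num
    have hH := ENNReal.lintegral_mul_le_Lp_mul_Lq (Measure.count (α := ℕ)) hpq
      (f := f) (g := g) (measurable_of_countable _).aemeasurable (measurable_of_countable _).aemeasurable
    simp only [Pi.mul_apply, lintegral_count] at hH
    have hstep : ∑' j, x j ≤ (∑' j, f j ^ p) ^ (1/p) * (∑' j, g j ^ q) ^ (1/q) := by
      calc ∑' j, x j = ∑' j, f j * g j := by simp_rw [hfg]
        _ ≤ _ := hH
    have hfp : ∀ j : ℕ, f j ^ p = ENNReal.ofReal ((2:ℝ) ^ ((-δ * p) * j)) := by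
      intro j
      rw [hf]
      simp only
      rw [ENNReal.ofReal_rpow_of_pos (Real.rpow_pos_of_pos two_pos _)]
      congr 1
      rw [← Real.rpow_mul (by norm_num)]
      ring_nf
    have hgq : ∀ j : ℕ, g j ^ q = ENNReal.ofReal ((2:ℝ) ^ (δ * j * q)) * x j ^ q := by
      intro j
      rw [hg]
      simp only
      rw [ENNReal.mul_rpow_of_nonneg _ _ hq.le,
        ENNReal.ofReal_rpow_of_pos (Real.rpow_pos_of_pos two_pos _)]
      congr 2
      rw [← Real.rpow_mul (by norm_num)]
    calc (∑' j, x j) ^ q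
        ≤ ((∑' j, f j ^ p) ^ (1/p) * (∑' j, g j ^ q) ^ (1/q)) ^ q :=
          ENNReal.rpow_le_rpow hstep hq.le
      _ = (∑' j, f j ^ p) ^ (q/p) * ∑' j, g j ^ q := by
          rw [ENNReal.mul_rpow_of_nonneg _ _ hq.le, ← ENNReal.rpow_mul, ← ENNReal.rpow_mul]
          rw [one_div_mul_eq_div, one_div_mul_eq_div, div_self hq0, ENNReal.rpow_one]
      _ = B ^ (q/p) * ∑' j : ℕ, ENNReal.ofReal ((2:ℝ) ^ (δ * j * q)) * x j ^ q := by
          rw [hB]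
          simp_rw [hfp, hgq]

end Stmt4Aux

open Stmt4Aux

/-- With `t_k = 2^(1-2^k)`, `λ > 0`, `q > 0`, for `H : (0,1) → [0,∞)` locally integrable
with `∫₀¹ H ≤ C₀ ∫₀^{1/2} H`, the sum `∑ₖ (∫₀^{t_k} H)^q 2^{λkq}` is comparable
(constants depending only on `λ, q, C₀`) to `∑ₖ (2^{λk} ∫_{t_{k+1}}^{t_k} H)^q`. -/
theorem stmt_4 (lam q C₀ : ℝ) (hlam : 0 < lam) (hq : 0 < q) :
    ∃ C : ℝ≥0∞, 0 < C ∧ C ≠ ⊤ ∧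
      ∀ H : ℝ → ℝ≥0∞, Measurable H →
        (∫⁻ x in Ioo (0:ℝ) 1, H x) ≤ ENNReal.ofReal C₀ * ∫⁻ x in Ioo (0:ℝ) (1/2), H x →
        ((∑' k : ℕ, (∫⁻ x in Ioo (0:ℝ) ((2:ℝ) ^ (1 - 2 ^ k : ℝ)), H x) ^ q *
              ENNReal.ofReal ((2:ℝ) ^ (lam * k * q))) ≤
            C * ∑' k : ℕ,
              (ENNReal.ofReal ((2:ℝ) ^ (lam * k)) *
                ∫⁻ x in Ioo ((2:ℝ) ^ (1 - 2 ^ (k+1) : ℝ)) ((2:ℝ) ^ (1 - 2 ^ k : ℝ)), H x) ^ q) ∧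
        ((∑' k : ℕ,
              (ENNReal.ofReal ((2:ℝ) ^ (lam * k)) *
                ∫⁻ x in Ioo ((2:ℝ) ^ (1 - 2 ^ (k+1) : ℝ)) ((2:ℝ) ^ (1 - 2 ^ k : ℝ)), H x) ^ q) ≤
            C * ∑' k : ℕ, (∫⁻ x in Ioo (0:ℝ) ((2:ℝ) ^ (1 - 2 ^ k : ℝ)), H x) ^ q *
              ENNReal.ofReal ((2:ℝ) ^ (lam * k * q))) := by
  obtain ⟨A, hAne, hA⟩ := key_sum (lam / 2) q (by linarith) hq
  set B : ℝ≥0∞ := ∑' j : ℕ, ENNReal.ofReal ((2:ℝ) ^ ((-(lam/2) * q) * j)) with hB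
  have hBne : B ≠ ⊤ := geom_ne_top (by nlinarith)
  refine ⟨A * B + 1, lt_of_lt_of_le one_pos le_add_self, by finiteness, ?_⟩
  intro H hH _
  -- notation
  set a : ℕ → ℝ≥0∞ := fun k => ∫⁻ x in Ioo (tt (k+1)) (tt k), H x with ha
  set I : ℕ → ℝ≥0∞ := fun k => ∫⁻ x in Ioo 0 (tt k), H x with hI
  have hIa : ∀ k, I k = ∑' j : ℕ, a (k + j) := by
    intro k
    rw [hI]
    simp only
    rw [integral_split hH k]
  have hWq : ∀ k : ℕ, (ENNReal.ofReal ((2:ℝ) ^ (lam * k))) ^ q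
      = ENNReal.ofReal ((2:ℝ) ^ (lam * k * q)) := by
    intro k
    rw [ENNReal.ofReal_rpow_of_pos (Real.rpow_pos_of_pos two_pos _)]
    congr 1
    rw [← Real.rpow_mul (by norm_num)]
  -- rewrite the statement sums in terms of a, I
  have hrhs : ∀ k : ℕ,
      (ENNReal.ofReal ((2:ℝ) ^ (lam * k)) *
        ∫⁻ x in Ioo ((2:ℝ) ^ (1 - 2 ^ (k+1) : ℝ)) ((2:ℝ) ^ (1 - 2 ^ k : ℝ)), H x) ^ q
      = ENNReal.ofReal ((2:ℝ) ^ (lam * k * q)) * a k ^ q := by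
    intro k
    rw [ENNReal.mul_rpow_of_nonneg _ _ hq.le, hWq]
    rfl
  constructor
  · -- hard direction
    have hterm : ∀ k : ℕ,
        (I k) ^ q * ENNReal.ofReal ((2:ℝ) ^ (lam * k * q)) ≤
        A * ∑' j : ℕ, ENNReal.ofReal ((2:ℝ) ^ ((-(lam/2) * q) * j)) *
          (ENNReal.ofReal ((2:ℝ) ^ (lam * (k + j : ℕ) * q)) * a (k + j) ^ q) := by
      intro k
      have h1 := hA (fun j => a (k + j))
      rw [← hIa k] at h1
      calc (I k) ^ q * ENNReal.ofReal ((2:ℝ) ^ (lam * k * q))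
          ≤ (A * ∑' j : ℕ, ENNReal.ofReal ((2:ℝ) ^ ((lam/2) * j * q)) * a (k + j) ^ q) *
              ENNReal.ofReal ((2:ℝ) ^ (lam * k * q)) := by gcongr
        _ = A * ∑' j : ℕ, (ENNReal.ofReal ((2:ℝ) ^ ((lam/2) * j * q)) *
              ENNReal.ofReal ((2:ℝ) ^ (lam * k * q))) * a (k + j) ^ q := by
            rw [mul_assoc, ← ENNReal.tsum_mul_right]
            congr 1
            apply tsum_congr
            intro j
            ring
        _ = A * ∑' j : ℕ, ENNReal.ofReal ((2:ℝ) ^ ((-(lam/2) * q) * j)) *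
              (ENNReal.ofReal ((2:ℝ) ^ (lam * (k + j : ℕ) * q)) * a (k + j) ^ q) := by
            congr 1
            apply tsum_congr
            intro j
            rw [← ofReal_two_rpow_add, ← mul_assoc, ← ofReal_two_rpow_add]
            congr 2
            push_cast
            ring
    calc ∑' k : ℕ, (I k) ^ q * ENNReal.ofReal ((2:ℝ) ^ (lam * k * q))
        ≤ ∑' k : ℕ, A * ∑' j : ℕ, ENNReal.ofReal ((2:ℝ) ^ ((-(lam/2) * q) * j)) *
            (ENNReal.ofReal ((2:ℝ) ^ (lam * (k + j : ℕ) * q)) * a (k + j) ^ q) :=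
          ENNReal.tsum_le_tsum hterm
      _ = A * ∑' j : ℕ, ENNReal.ofReal ((2:ℝ) ^ ((-(lam/2) * q) * j)) *
            ∑' k : ℕ, (ENNReal.ofReal ((2:ℝ) ^ (lam * (k + j : ℕ) * q)) * a (k + j) ^ q) := by
          rw [ENNReal.tsum_mul_left]
          congr 1
          rw [ENNReal.tsum_comm]
          apply tsum_congr
          intro j
          rw [ENNReal.tsum_mul_left]
      _ ≤ A * ∑' j : ℕ, ENNReal.ofReal ((2:ℝ) ^ ((-(lam/2) * q) * j)) *
            ∑' n : ℕ, (ENNReal.ofReal ((2:ℝ) ^ (lam * n * q)) * a n ^ q) := by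
          refine mul_le_mul' le_rfl (ENNReal.tsum_le_tsum fun j => mul_le_mul' le_rfl ?_)
          exact Summable.tsum_le_tsum_of_inj (fun k => k + j) (add_left_injective j)
            (fun n _ => zero_le) (fun k => le_rfl) ENNReal.summable ENNReal.summable
      _ = (A * B) * ∑' n : ℕ, (ENNReal.ofReal ((2:ℝ) ^ (lam * n * q)) * a n ^ q) := by
          rw [ENNReal.tsum_mul_right, hB, mul_assoc]
      _ ≤ (A * B + 1) * ∑' n : ℕ, (ENNReal.ofReal ((2:ℝ) ^ (lam * n * q)) * a n ^ q) := by
          gcongr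
          exact le_self_add
      _ = (A * B + 1) * ∑' k : ℕ,
            (ENNReal.ofReal ((2:ℝ) ^ (lam * k)) *
              ∫⁻ x in Ioo ((2:ℝ) ^ (1 - 2 ^ (k+1) : ℝ)) ((2:ℝ) ^ (1 - 2 ^ k : ℝ)), H x) ^ q := by
          congr 1
          apply tsum_congr
          intro k
          rw [hrhs k]
  · -- easy direction
    have hterm : ∀ k : ℕ,
        (ENNReal.ofReal ((2:ℝ) ^ (lam * k)) *
          ∫⁻ x in Ioo ((2:ℝ) ^ (1 - 2 ^ (k+1) : ℝ)) ((2:ℝ) ^ (1 - 2 ^ k : ℝ)), H x) ^ q ≤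
        (I k) ^ q * ENNReal.ofReal ((2:ℝ) ^ (lam * k * q)) := by
      intro k
      rw [hrhs k, mul_comm]
      gcongr
      rw [ha, hI]
      simp only
      apply lintegral_mono_set
      apply Ioo_subset_Ioo (tt_pos (k+1)).le le_rfl
    calc ∑' k : ℕ, (ENNReal.ofReal ((2:ℝ) ^ (lam * k)) *
          ∫⁻ x in Ioo ((2:ℝ) ^ (1 - 2 ^ (k+1) : ℝ)) ((2:ℝ) ^ (1 - 2 ^ k : ℝ)), H x) ^ q
        ≤ ∑' k : ℕ, (I k) ^ q * ENNReal.ofReal ((2:ℝ) ^ (lam * k * q)) :=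
          ENNReal.tsum_le_tsum hterm
      _ ≤ (A * B + 1) * ∑' k : ℕ, (I k) ^ q * ENNReal.ofReal ((2:ℝ) ^ (lam * k * q)) := by
          conv_lhs => rw [← one_mul (∑' k : ℕ, (I k) ^ q * ENNReal.ofReal ((2:ℝ) ^ (lam * k * q)))]
          gcongr
          exact le_add_self
end

section
/- Let n ≥ 2, n' = n/(n-1), and 1/n' < α ≤ 1. Then there exists c > 0 such that for every v in the small Lebesgue space L^{(n'}, one has ‖v‖_{L^{n',∞}} ≤ c ‖v‖_{L^{n')}}^{1-α} ‖v‖_{L^{(n'}}^α. -/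
open MeasureTheory Set ENNReal

noncomputable section

/-- The decreasing rearrangement of `f` with respect to the measure `μ` on `ℝ`:
`f_*(s) = inf {l ≥ 0 : μ{|f| > l} ≤ s}`. -/
def rearr (μ : Measure ℝ) (f : ℝ → ℝ) (s : ℝ) : ℝ :=
  sInf {l : ℝ | 0 ≤ l ∧ μ {x | l < |f x|} ≤ ENNReal.ofReal s}

/-- Lebesgue measure on the underlying probability measure space `(0,1)`. -/
def μ0 : Measure ℝ := volume.restrict (Ioo (0:ℝ) 1)

/-- The `L^p` norm expressed through the decreasing rearrangement. -/
def lpNorm (p : ℝ) (f : ℝ → ℝ) : ℝ≥0∞ :=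
  (∫⁻ s in Ioo (0:ℝ) 1, ENNReal.ofReal (rearr μ0 f s ^ p)) ^ (1/p)

/-- The weak `L^{p,∞}` quasinorm `sup_{0<s<1} s^{1/p} f_*(s)`. -/
def weakNorm (p : ℝ) (f : ℝ → ℝ) : ℝ≥0∞ :=
  ⨆ s ∈ Ioo (0:ℝ) 1, ENNReal.ofReal (s ^ (1/p) * rearr μ0 f s)

/-- The small Lebesgue space norm
`‖f‖_{L^{(p}} = ∫₀¹ (1-log s)^{-1/p} (∫₀ˢ f_*(u)^p du)^{1/p} ds/s`. -/
def smallNorm (p : ℝ) (f : ℝ → ℝ) : ℝ≥0∞ :=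
  ∫⁻ s in Ioo (0:ℝ) 1,
    ENNReal.ofReal ((1 - Real.log s) ^ (-(1/p)) / s) *
      (∫⁻ u in Ioo (0:ℝ) s, ENNReal.ofReal (rearr μ0 f u ^ p)) ^ (1/p)

/-- The grand Lebesgue space norm
`‖f‖_{L^{p),θ}} = sup_{0<s<1} (1-log s)^{-θ/p} (∫ₛ¹ f_*(x)^p dx)^{1/p}`. -/
def grandNorm (p θ : ℝ) (f : ℝ → ℝ) : ℝ≥0∞ :=
  ⨆ s ∈ Ioo (0:ℝ) 1,
    ENNReal.ofReal ((1 - Real.log s) ^ (-(θ/p))) *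
      (∫⁻ x in Ioo s 1, ENNReal.ofReal (rearr μ0 f x ^ p)) ^ (1/p)

/-- The Peetre `K`-functional for a couple of (quasi)normed function spaces with
(quasi)norms `N0`, `N1`: `K(f,t) = inf {N0(g) + t N1(h) : f = g + h}`. -/
def Kfun (N0 N1 : (ℝ → ℝ) → ℝ≥0∞) (f : ℝ → ℝ) (t : ℝ) : ℝ≥0∞ :=
  ⨅ (g : ℝ → ℝ) (h : ℝ → ℝ) (_ : f = g + h), N0 g + ENNReal.ofReal t * N1 h

lemma rearr_nonneg (f : ℝ → ℝ) (s : ℝ) : 0 ≤ rearr μ0 f s :=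
  Real.sInf_nonneg fun _ hl => hl.1

lemma rearr_set_nonempty {v : ℝ → ℝ} (hv : Measurable v) {u : ℝ} (hu : 0 < u) :
    {l : ℝ | 0 ≤ l ∧ μ0 {x | l < |v x|} ≤ ENNReal.ofReal u}.Nonempty := by
  have hmeas : ∀ k : ℕ, NullMeasurableSet {x : ℝ | (k:ℝ) < |v x|} μ0 :=
    fun k => (measurableSet_lt measurable_const hv.abs).nullMeasurableSet
  have hanti : Antitone (fun k : ℕ => {x : ℝ | (k:ℝ) < |v x|}) := by
    intro i j hij x hx
    simp only [mem_setOf_eq] at hx ⊢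
    exact lt_of_le_of_lt (Nat.cast_le.2 hij) hx
  have hfin : ∃ k : ℕ, μ0 {x : ℝ | (k:ℝ) < |v x|} ≠ ∞ := by
    refine ⟨0, ne_of_lt (lt_of_le_of_lt (measure_mono (subset_univ _)) ?_)⟩
    rw [μ0, Measure.restrict_apply_univ, Real.volume_Ioo]
    exact lt_of_le_of_lt (ofReal_le_one.2 (by norm_num)) one_lt_top
  have h0 : (⋂ k : ℕ, {x : ℝ | (k:ℝ) < |v x|}) = ∅ := by
    ext x
    simp only [mem_iInter, mem_setOf_eq, mem_empty_iff_false, iff_false, not_forall, not_lt]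
    obtain ⟨k, hk⟩ := exists_nat_ge |v x|
    exact ⟨k, hk⟩
  have htend := tendsto_measure_iInter_atTop hmeas hanti hfin
  rw [h0, measure_empty] at htend
  obtain ⟨k, hk⟩ := (htend.eventually (gt_mem_nhds
    (show (0:ℝ≥0∞) < ENNReal.ofReal u from ofReal_pos.2 hu))).exists
  exact ⟨(k:ℝ), Nat.cast_nonneg k, le_of_lt hk⟩

lemma rearr_anti {v : ℝ → ℝ} (hv : Measurable v) {u s : ℝ} (hu : 0 < u) (hus : u ≤ s) :
    rearr μ0 v s ≤ rearr μ0 v u := by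
  refine csInf_le_csInf ⟨0, fun l hl => hl.1⟩ (rearr_set_nonempty hv hu) ?_
  exact fun l hl => ⟨hl.1, hl.2.trans (ofReal_le_ofReal hus)⟩

lemma lint_lower {v : ℝ → ℝ} (hv : Measurable v) {p : ℝ} (hp : 0 ≤ p) {a b : ℝ}
    (ha : 0 ≤ a) (hab : a < b) :
    ENNReal.ofReal (rearr μ0 v b ^ p * (b - a)) ≤
      ∫⁻ u in Ioo a b, ENNReal.ofReal (rearr μ0 v u ^ p) := by
  rw [ofReal_mul (Real.rpow_nonneg (rearr_nonneg v b) p)]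
  calc ENNReal.ofReal (rearr μ0 v b ^ p) * ENNReal.ofReal (b - a)
      = ∫⁻ _ in Ioo a b, ENNReal.ofReal (rearr μ0 v b ^ p) := by
        rw [setLIntegral_const, Real.volume_Ioo]
    _ ≤ ∫⁻ u in Ioo a b, ENNReal.ofReal (rearr μ0 v u ^ p) := by
        refine setLIntegral_mono' measurableSet_Ioo fun u hu => ?_
        exact ofReal_le_ofReal (Real.rpow_le_rpow (rearr_nonneg v b)
          (rearr_anti hv (lt_of_le_of_lt ha hu.1) hu.2.le) hp)

lemma F_lower {v : ℝ → ℝ} (hv : Measurable v) {p : ℝ} (hp : 0 < p) {a b : ℝ}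
    (ha : 0 ≤ a) (hab : a < b) :
    ENNReal.ofReal (rearr μ0 v b * (b - a) ^ (1/p)) ≤
      (∫⁻ u in Ioo a b, ENNReal.ofReal (rearr μ0 v u ^ p)) ^ (1/p) := by
  have h2 := ENNReal.rpow_le_rpow (lint_lower hv hp.le ha hab) (by positivity : (0:ℝ) ≤ 1/p)
  rw [ofReal_rpow_of_nonneg (mul_nonneg (Real.rpow_nonneg (rearr_nonneg v b) p) (by linarith))
      (by positivity)] at h2
  rw [Real.mul_rpow (Real.rpow_nonneg (rearr_nonneg v b) p) (by linarith : (0:ℝ) ≤ b - a),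
    ← Real.rpow_mul (rearr_nonneg v b), mul_one_div_cancel hp.ne', Real.rpow_one] at h2
  exact h2

lemma combine {X A B : ℝ≥0∞} {a b α : ℝ} (hX : X ≠ ⊤) (hα0 : 0 ≤ α) (hα1 : α ≤ 1)
    (ha : 0 ≤ a) (hb : 0 ≤ b)
    (h1 : X ≤ ENNReal.ofReal a * A) (h2 : X ≤ ENNReal.ofReal b * B) :
    X ≤ ENNReal.ofReal (a ^ (1-α) * b ^ α) * (A ^ (1-α) * B ^ α) := by
  rcases eq_or_ne X 0 with h | h
  · rw [h]; exact zero_le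
  calc X = X ^ (1-α) * X ^ α := by
        rw [← ENNReal.rpow_add _ _ h hX, sub_add_cancel, ENNReal.rpow_one]
    _ ≤ (ENNReal.ofReal a * A) ^ (1-α) * (ENNReal.ofReal b * B) ^ α :=
        mul_le_mul' (ENNReal.rpow_le_rpow h1 (by linarith)) (ENNReal.rpow_le_rpow h2 hα0)
    _ = (ENNReal.ofReal (a ^ (1-α)) * A ^ (1-α)) * (ENNReal.ofReal (b ^ α) * B ^ α) := by
        rw [ENNReal.mul_rpow_of_nonneg _ _ (by linarith : (0:ℝ) ≤ 1-α),
          ENNReal.mul_rpow_of_nonneg _ _ hα0,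
          ofReal_rpow_of_nonneg ha (by linarith), ofReal_rpow_of_nonneg hb hα0]
    _ = ENNReal.ofReal (a ^ (1-α) * b ^ α) * (A ^ (1-α) * B ^ α) := by
        rw [ofReal_mul (Real.rpow_nonneg ha _)]; ring

set_option maxHeartbeats 1000000 in
/-- Interpolation inequality: for `n ≥ 2`, `n' = n/(n-1)` and `1/n' < α ≤ 1`, there is
`c > 0` such that `‖v‖_{L^{n',∞}} ≤ c ‖v‖_{L^{n')}}^{1-α} ‖v‖_{L^{(n'}}^α` for every
`v` in the small Lebesgue space `L^{(n'}`. -/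
theorem stmt_19 (n : ℕ) (hn : 2 ≤ n) (α : ℝ)
    (hα1 : ((n:ℝ)-1)/n < α) (hα2 : α ≤ 1) :
    ∃ C : ℝ≥0∞, 0 < C ∧ C ≠ ⊤ ∧
      ∀ v : ℝ → ℝ, Measurable v → smallNorm ((n:ℝ)/((n:ℝ)-1)) v ≠ ⊤ →
        weakNorm ((n:ℝ)/((n:ℝ)-1)) v ≤
          C * (grandNorm ((n:ℝ)/((n:ℝ)-1)) 1 v) ^ (1-α) *
            (smallNorm ((n:ℝ)/((n:ℝ)-1)) v) ^ α := by
  have hn2 : (2:ℝ) ≤ (n:ℝ) := by exact_mod_cast hn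
  set p : ℝ := (n:ℝ)/((n:ℝ)-1) with hpdef
  have hp1 : 1 < p := by
    rw [hpdef, lt_div_iff₀ (by linarith)]; linarith
  have hp0 : 0 < p := lt_trans one_pos hp1
  have hq0 : 0 < 1/p := by positivity
  have hq1 : 1/p ≤ 1 := by rw [div_le_one hp0]; linarith
  have hαq : 1/p < α := by
    have h : 1/p = ((n:ℝ)-1)/n := by rw [hpdef, one_div_div]
    rw [h]; exact hα1
  have hα0 : 0 < α := lt_trans hq0 hαq
  refine ⟨ENNReal.ofReal 100, ofReal_pos.2 (by norm_num), ofReal_ne_top, ?_⟩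
  intro v hv _
  -- basic bound : X t ≤ Φ t
  have hXF : ∀ t : ℝ, 0 < t →
      ENNReal.ofReal (t ^ (1/p) * rearr μ0 v t) ≤
        (∫⁻ u in Ioo (0:ℝ) t, ENNReal.ofReal (rearr μ0 v u ^ p)) ^ (1/p) := by
    intro t ht
    have h := F_lower hv hp0 le_rfl ht
    rw [sub_zero, mul_comm] at h
    exact h
  -- bound via the small norm, for points with 2 ≤ 1 - log w
  have hBbound : ∀ w : ℝ, w ∈ Ioo (0:ℝ) 1 → 2 ≤ 1 - Real.log w →
      (∫⁻ u in Ioo (0:ℝ) w, ENNReal.ofReal (rearr μ0 v u ^ p)) ^ (1/p) ≤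
        ENNReal.ofReal (4 * (1 - Real.log w) ^ (-(1-1/p))) * smallNorm p v := by
    intro w hw h2L
    obtain ⟨hw0, hw1⟩ := hw
    have hLw0 : (0:ℝ) < 1 - Real.log w := by linarith
    set Lw : ℝ := 1 - Real.log w with hLwdef
    set Φw := (∫⁻ u in Ioo (0:ℝ) w, ENNReal.ofReal (rearr μ0 v u ^ p)) ^ (1/p) with hΦw
    set t := Real.sqrt w with htdef
    have ht0 : 0 < t := Real.sqrt_pos.2 hw0
    have hwt : w < t := by
      rw [htdef, Real.lt_sqrt hw0.le]; nlinarith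
    have ht1 : t < 1 := by
      rw [htdef]
      calc Real.sqrt w < Real.sqrt 1 := Real.sqrt_lt_sqrt hw0.le hw1
        _ = 1 := Real.sqrt_one
    have hlogt : Real.log t = Real.log w / 2 := by rw [htdef, Real.log_sqrt hw0.le]
    -- pointwise bound on Ioo w t
    have hptw : ∀ u ∈ Ioo w t,
        (ENNReal.ofReal (Lw ^ (-(1/p))) * Φw) * ENNReal.ofReal u⁻¹ ≤
          ENNReal.ofReal ((1 - Real.log u) ^ (-(1/p)) / u) *
            (∫⁻ x in Ioo (0:ℝ) u, ENNReal.ofReal (rearr μ0 v x ^ p)) ^ (1/p) := by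
      intro u hu
      have hu0 : 0 < u := lt_trans hw0 hu.1
      have hu1 : u < 1 := lt_trans hu.2 ht1
      have hLu0 : 0 < 1 - Real.log u := by
        have := Real.log_neg hu0 hu1; linarith
      have h1 : ENNReal.ofReal (Lw ^ (-(1/p))) ≤
          ENNReal.ofReal ((1 - Real.log u) ^ (-(1/p))) := by
        apply ofReal_le_ofReal
        apply Real.rpow_le_rpow_of_nonpos hLu0 ?_ (by linarith)
        have := Real.log_le_log hw0 hu.1.le
        rw [hLwdef]; linarith
      have h2 : Φw ≤ (∫⁻ x in Ioo (0:ℝ) u, ENNReal.ofReal (rearr μ0 v x ^ p)) ^ (1/p) :=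
        ENNReal.rpow_le_rpow (lintegral_mono_set (Ioo_subset_Ioo le_rfl hu.1.le)) hq0.le
      calc (ENNReal.ofReal (Lw ^ (-(1/p))) * Φw) * ENNReal.ofReal u⁻¹
          = (ENNReal.ofReal (Lw ^ (-(1/p))) * ENNReal.ofReal u⁻¹) * Φw := by ring
        _ ≤ (ENNReal.ofReal ((1 - Real.log u) ^ (-(1/p))) * ENNReal.ofReal u⁻¹) *
              (∫⁻ x in Ioo (0:ℝ) u, ENNReal.ofReal (rearr μ0 v x ^ p)) ^ (1/p) :=
            mul_le_mul' (mul_le_mul_left h1 _) h2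
        _ = ENNReal.ofReal ((1 - Real.log u) ^ (-(1/p)) / u) *
              (∫⁻ x in Ioo (0:ℝ) u, ENNReal.ofReal (rearr μ0 v x ^ p)) ^ (1/p) := by
            rw [← ofReal_mul (Real.rpow_nonneg hLu0.le _),
              div_eq_mul_inv ((1 - Real.log u) ^ (-(1/p))) u]
    have hstep : (ENNReal.ofReal (Lw ^ (-(1/p))) * Φw) *
        (∫⁻ u in Ioo w t, ENNReal.ofReal u⁻¹) ≤ smallNorm p v := by
      refine le_trans (lintegral_const_mul_le _ _) ?_
      refine le_trans (setLIntegral_mono' measurableSet_Ioo hptw) ?_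
      rw [smallNorm]
      exact lintegral_mono_set (fun x hx => ⟨lt_trans hw0 hx.1, lt_trans hx.2 ht1⟩)
    have hint : IntegrableOn (fun u : ℝ => u⁻¹) (Ioo w t) volume := by
      apply (ContinuousOn.integrableOn_Icc ?_).mono_set Ioo_subset_Icc_self
      exact ContinuousOn.inv₀ (continuousOn_id) (fun x hx => ne_of_gt (lt_of_lt_of_le hw0 hx.1))
    have hnn : 0 ≤ᵐ[volume.restrict (Ioo w t)] fun u : ℝ => u⁻¹ := by
      refine (ae_restrict_iff' measurableSet_Ioo).2 (ae_of_all _ fun u hu => ?_)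
      exact inv_nonneg.2 (le_of_lt (lt_trans hw0 hu.1))
    have hval : (∫⁻ u in Ioo w t, ENNReal.ofReal u⁻¹) = ENNReal.ofReal (-Real.log w / 2) := by
      rw [← ofReal_integral_eq_lintegral_ofReal hint hnn]
      congr 1
      rw [← integral_Ioc_eq_integral_Ioo, ← intervalIntegral.integral_of_le hwt.le,
        integral_inv_of_pos hw0 ht0, Real.log_div (ne_of_gt ht0) (ne_of_gt hw0), hlogt]
      ring
    rw [hval] at hstep
    have hkey : Φw * ENNReal.ofReal (Lw ^ (-(1/p)) * ((Lw - 1)/2)) ≤ smallNorm p v := by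
      calc Φw * ENNReal.ofReal (Lw ^ (-(1/p)) * ((Lw - 1)/2))
          = (ENNReal.ofReal (Lw ^ (-(1/p))) * Φw) * ENNReal.ofReal ((Lw - 1)/2) := by
            rw [ofReal_mul (Real.rpow_nonneg hLw0.le _)]; ring
        _ = (ENNReal.ofReal (Lw ^ (-(1/p))) * Φw) * ENNReal.ofReal (-Real.log w / 2) := by
            rw [show (Lw - 1)/2 = -Real.log w / 2 by rw [hLwdef]; ring]
        _ ≤ smallNorm p v := hstep
    have hcc : Lw ^ (1 - 1/p) / 4 ≤ Lw ^ (-(1/p)) * ((Lw - 1)/2) := by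
      have h1 : Lw ^ (-(1/p)) * (Lw/4) = Lw ^ (1-1/p) / 4 := by
        rw [show (1:ℝ) - 1/p = -(1/p) + 1 by ring, Real.rpow_add hLw0, Real.rpow_one]; ring
      calc Lw ^ (1-1/p)/4 = Lw ^ (-(1/p)) * (Lw/4) := h1.symm
        _ ≤ Lw ^ (-(1/p)) * ((Lw-1)/2) :=
            mul_le_mul_of_nonneg_left (by linarith) (Real.rpow_nonneg hLw0.le _)
    have hkey2 : Φw * ENNReal.ofReal (Lw ^ (1-1/p) / 4) ≤ smallNorm p v :=
      le_trans (mul_le_mul' le_rfl (ofReal_le_ofReal hcc)) hkey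
    have hone : (Lw ^ (1-1/p) / 4) * (4 * Lw ^ (-(1-1/p))) = 1 := by
      have e : Lw ^ (1-1/p) * Lw ^ (-(1-1/p)) = 1 := by
        rw [← Real.rpow_add hLw0]; simp
      calc (Lw ^ (1-1/p)/4) * (4 * Lw ^ (-(1-1/p)))
          = Lw ^ (1-1/p) * Lw ^ (-(1-1/p)) := by ring
        _ = 1 := e
    calc Φw = Φw * (ENNReal.ofReal (Lw ^ (1-1/p)/4) * ENNReal.ofReal (4 * Lw ^ (-(1-1/p)))) := by
          rw [← ofReal_mul (div_nonneg (Real.rpow_nonneg hLw0.le _) (by norm_num)), hone,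
            ofReal_one, mul_one]
      _ = (Φw * ENNReal.ofReal (Lw ^ (1-1/p)/4)) * ENNReal.ofReal (4 * Lw ^ (-(1-1/p))) := by
          ring
      _ ≤ smallNorm p v * ENNReal.ofReal (4 * Lw ^ (-(1-1/p))) := mul_le_mul_left hkey2 _
      _ = ENNReal.ofReal (4 * Lw ^ (-(1-1/p))) * smallNorm p v := mul_comm _ _
  -- main estimate, pointwise in s
  rw [weakNorm]
  refine iSup₂_le fun s hs => ?_
  obtain ⟨hs0, hs1⟩ := hs
  have hlogs : Real.log s < 0 := Real.log_neg hs0 hs1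
  set L : ℝ := 1 - Real.log s with hLdef
  have hL1 : 1 < L := by rw [hLdef]; linarith
  have hL0 : 0 < L := by linarith
  have h2p : (2:ℝ)^(1/p) ≤ 2 := by
    calc (2:ℝ)^(1/p) ≤ 2^(1:ℝ) := Real.rpow_le_rpow_of_exponent_le one_le_two hq1
      _ = 2 := Real.rpow_one 2
  -- the grand norm bound
  have hXA : ENNReal.ofReal (s ^ (1/p) * rearr μ0 v s) ≤
      ENNReal.ofReal (4 * L ^ (1/p)) * grandNorm p 1 v := by
    have hhalf : s/2 ∈ Ioo (0:ℝ) 1 := ⟨by linarith, by linarith⟩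
    have hL2pos : 0 < 1 - Real.log (s/2) := by
      have := Real.log_neg (by linarith : (0:ℝ) < s/2) (by linarith : s/2 < 1); linarith
    have hA1 : ENNReal.ofReal ((1 - Real.log (s/2)) ^ (-(1/p))) *
        (∫⁻ x in Ioo (s/2) 1, ENNReal.ofReal (rearr μ0 v x ^ p)) ^ (1/p) ≤ grandNorm p 1 v := by
      rw [grandNorm]
      exact le_biSup (fun r => ENNReal.ofReal ((1 - Real.log r) ^ (-(1/p))) *
        (∫⁻ x in Ioo r 1, ENNReal.ofReal (rearr μ0 v x ^ p)) ^ (1/p)) hhalf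
    have hkey1 : ENNReal.ofReal (rearr μ0 v s * (s/2) ^ (1/p)) ≤
        (∫⁻ x in Ioo (s/2) 1, ENNReal.ofReal (rearr μ0 v x ^ p)) ^ (1/p) := by
      refine le_trans ?_ (ENNReal.rpow_le_rpow
        (lintegral_mono_set (Ioo_subset_Ioo le_rfl hs1.le)) hq0.le)
      have h := F_lower hv hp0 (by linarith : (0:ℝ) ≤ s/2) (by linarith : s/2 < s)
      rw [show s - s/2 = s/2 by ring] at h
      exact h
    have h2 : ENNReal.ofReal (rearr μ0 v s * (s/2) ^ (1/p)) ≤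
        ENNReal.ofReal ((1 - Real.log (s/2)) ^ (1/p)) * grandNorm p 1 v := by
      calc ENNReal.ofReal (rearr μ0 v s * (s/2) ^ (1/p))
          = ENNReal.ofReal ((1 - Real.log (s/2)) ^ (1/p)) *
              (ENNReal.ofReal ((1 - Real.log (s/2)) ^ (-(1/p))) *
                ENNReal.ofReal (rearr μ0 v s * (s/2) ^ (1/p))) := by
            rw [← mul_assoc, ← ofReal_mul (Real.rpow_nonneg hL2pos.le _),
              ← Real.rpow_add hL2pos, add_neg_cancel, Real.rpow_zero, ofReal_one, one_mul]
        _ ≤ ENNReal.ofReal ((1 - Real.log (s/2)) ^ (1/p)) *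
              (ENNReal.ofReal ((1 - Real.log (s/2)) ^ (-(1/p))) *
                (∫⁻ x in Ioo (s/2) 1, ENNReal.ofReal (rearr μ0 v x ^ p)) ^ (1/p)) :=
            mul_le_mul' le_rfl (mul_le_mul' le_rfl hkey1)
        _ ≤ ENNReal.ofReal ((1 - Real.log (s/2)) ^ (1/p)) * grandNorm p 1 v :=
            mul_le_mul' le_rfl hA1
    have hr1 : s ^ (1/p) * rearr μ0 v s ≤ 2 * (rearr μ0 v s * (s/2) ^ (1/p)) := by
      have e : s ^ (1/p) = 2 ^ (1/p) * (s/2) ^ (1/p) := by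
        rw [← Real.mul_rpow (by norm_num) (by linarith : (0:ℝ) ≤ s/2)]
        congr 1
        ring
      calc s ^ (1/p) * rearr μ0 v s = 2 ^ (1/p) * ((s/2) ^ (1/p) * rearr μ0 v s) := by
            rw [e]; ring
        _ ≤ 2 * ((s/2) ^ (1/p) * rearr μ0 v s) :=
            mul_le_mul_of_nonneg_right h2p
              (mul_nonneg (Real.rpow_nonneg (by linarith) _) (rearr_nonneg v s))
        _ = 2 * (rearr μ0 v s * (s/2) ^ (1/p)) := by ring
    have hr2 : (1 - Real.log (s/2)) ^ (1/p) ≤ 2 * L ^ (1/p) := by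
      have hlog2 : Real.log 2 ≤ 1 := by
        have := Real.log_le_sub_one_of_pos (by norm_num : (0:ℝ) < 2); linarith
      have hle : 1 - Real.log (s/2) ≤ 2 * L := by
        rw [Real.log_div (ne_of_gt hs0) (by norm_num), hLdef]
        linarith
      calc (1 - Real.log (s/2)) ^ (1/p) ≤ (2*L) ^ (1/p) :=
            Real.rpow_le_rpow hL2pos.le hle hq0.le
        _ = 2 ^ (1/p) * L ^ (1/p) := Real.mul_rpow (by norm_num) hL0.le
        _ ≤ 2 * L ^ (1/p) := mul_le_mul_of_nonneg_right h2p (Real.rpow_nonneg hL0.le _)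
    calc ENNReal.ofReal (s ^ (1/p) * rearr μ0 v s)
        ≤ ENNReal.ofReal (2 * (rearr μ0 v s * (s/2) ^ (1/p))) := ofReal_le_ofReal hr1
      _ = ENNReal.ofReal 2 * ENNReal.ofReal (rearr μ0 v s * (s/2) ^ (1/p)) :=
          ofReal_mul (by norm_num)
      _ ≤ ENNReal.ofReal 2 * (ENNReal.ofReal ((1 - Real.log (s/2)) ^ (1/p)) * grandNorm p 1 v) :=
          mul_le_mul' le_rfl h2
      _ ≤ ENNReal.ofReal 2 * (ENNReal.ofReal (2 * L ^ (1/p)) * grandNorm p 1 v) :=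
          mul_le_mul' le_rfl (mul_le_mul_left (ofReal_le_ofReal hr2) _)
      _ = ENNReal.ofReal (4 * L ^ (1/p)) * grandNorm p 1 v := by
          rw [← mul_assoc, ← ofReal_mul (by norm_num : (0:ℝ) ≤ 2),
            show (2:ℝ) * (2 * L ^ (1/p)) = 4 * L ^ (1/p) by ring]
  by_cases h2L : 2 ≤ L
  · -- small s : use interpolation with the log weights
    have hM2 : ENNReal.ofReal (s ^ (1/p) * rearr μ0 v s) ≤
        ENNReal.ofReal (4 * L ^ (-(1-1/p))) * smallNorm p v :=
      le_trans (hXF s hs0) (hBbound s ⟨hs0, hs1⟩ h2L)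
    have hcomb := combine (X := ENNReal.ofReal (s ^ (1/p) * rearr μ0 v s)) ofReal_ne_top
      hα0.le hα2 (by positivity) (mul_nonneg (by norm_num) (Real.rpow_nonneg hL0.le _)) hXA hM2
    have e : (4 * L ^ (1/p)) ^ (1-α) * (4 * L ^ (-(1-1/p))) ^ α = 4 * L ^ (1/p - α) := by
      have e4 : (4:ℝ) ^ (1-α) * 4 ^ α = 4 := by
        rw [← Real.rpow_add (by norm_num : (0:ℝ) < 4)]; norm_num
      have eL : L ^ ((1/p)*(1-α)) * L ^ ((-(1-1/p))*α) = L ^ (1/p - α) := by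
        rw [← Real.rpow_add hL0]; congr 1; ring
      calc (4 * L ^ (1/p)) ^ (1-α) * (4 * L ^ (-(1-1/p))) ^ α
          = (4 ^ (1-α) * (L ^ (1/p)) ^ (1-α)) * (4 ^ α * (L ^ (-(1-1/p))) ^ α) := by
            rw [Real.mul_rpow (by norm_num) (Real.rpow_nonneg hL0.le _),
              Real.mul_rpow (by norm_num) (Real.rpow_nonneg hL0.le _)]
        _ = (4 ^ (1-α) * 4 ^ α) * (L ^ ((1/p)*(1-α)) * L ^ ((-(1-1/p))*α)) := by
            rw [← Real.rpow_mul hL0.le, ← Real.rpow_mul hL0.le]; ring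
        _ = 4 * L ^ (1/p - α) := by rw [e4, eL]
    have hle100 : (4 * L ^ (1/p)) ^ (1-α) * (4 * L ^ (-(1-1/p))) ^ α ≤ 100 := by
      rw [e]
      have : L ^ (1/p - α) ≤ 1 :=
        Real.rpow_le_one_of_one_le_of_nonpos hL1.le (by linarith)
      nlinarith
    calc ENNReal.ofReal (s ^ (1/p) * rearr μ0 v s)
        ≤ ENNReal.ofReal ((4 * L ^ (1/p)) ^ (1-α) * (4 * L ^ (-(1-1/p))) ^ α) *
            (grandNorm p 1 v ^ (1-α) * smallNorm p v ^ α) := hcomb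
      _ ≤ ENNReal.ofReal 100 * (grandNorm p 1 v ^ (1-α) * smallNorm p v ^ α) :=
          mul_le_mul_left (ofReal_le_ofReal hle100) _
      _ = ENNReal.ofReal 100 * grandNorm p 1 v ^ (1-α) * smallNorm p v ^ α := by ring
  · -- large s : both bounds with constant 12
    push_neg at h2L
    have hA' : ENNReal.ofReal (s ^ (1/p) * rearr μ0 v s) ≤
        ENNReal.ofReal 12 * grandNorm p 1 v := by
      refine le_trans hXA (mul_le_mul_left (ofReal_le_ofReal ?_) _)
      have : L ^ (1/p) ≤ L := by
        calc L ^ (1/p) ≤ L ^ (1:ℝ) := Real.rpow_le_rpow_of_exponent_le hL1.le hq1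
          _ = L := Real.rpow_one L
      nlinarith
    have hB' : ENNReal.ofReal (s ^ (1/p) * rearr μ0 v s) ≤
        ENNReal.ofReal 12 * smallNorm p v := by
      set w := Real.exp (-1) with hwdef
      have hw0 : 0 < w := Real.exp_pos _
      have hw1 : w < 1 := by
        rw [hwdef]
        calc Real.exp (-1) < Real.exp 0 := Real.exp_lt_exp.2 (by norm_num)
          _ = 1 := Real.exp_zero
      have hlogw : Real.log w = -1 := by rw [hwdef, Real.log_exp]
      have hLw : 1 - Real.log w = 2 := by rw [hlogw]; norm_num
      have hsw : w ≤ s := by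
        have h1 : (-1:ℝ) ≤ Real.log s := by rw [hLdef] at h2L; linarith
        calc w = Real.exp (-1) := rfl
          _ ≤ Real.exp (Real.log s) := Real.exp_le_exp.2 h1
          _ = s := Real.exp_log hs0
      have hwp : (1:ℝ) ≤ 3 * w ^ (1/p) := by
        have hw13 : (1:ℝ)/3 ≤ w := by
          rw [hwdef, Real.exp_neg, ← one_div]
          exact one_div_le_one_div_of_le (Real.exp_pos 1)
            (le_of_lt (lt_trans Real.exp_one_lt_d9 (by norm_num)))
        have : w ≤ w ^ (1/p) := by
          calc w = w ^ (1:ℝ) := (Real.rpow_one w).symm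
            _ ≤ w ^ (1/p) := Real.rpow_le_rpow_of_exponent_ge hw0 hw1.le hq1
        linarith
      have hgw : s ^ (1/p) * rearr μ0 v s ≤ 3 * (w ^ (1/p) * rearr μ0 v w) := by
        have h1 : s ^ (1/p) * rearr μ0 v s ≤ rearr μ0 v s := by
          have : s ^ (1/p) ≤ 1 := Real.rpow_le_one hs0.le hs1.le hq0.le
          nlinarith [rearr_nonneg v s]
        have h2 : rearr μ0 v s ≤ rearr μ0 v w := rearr_anti hv hw0 hsw
        have h3 : rearr μ0 v w ≤ 3 * (w ^ (1/p) * rearr μ0 v w) := by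
          nlinarith [rearr_nonneg v w, hwp]
        linarith
      have hc2 : (4:ℝ) * (2:ℝ) ^ (-(1-1/p)) ≤ 4 := by
        have : (2:ℝ) ^ (-(1-1/p)) ≤ 1 :=
          Real.rpow_le_one_of_one_le_of_nonpos one_le_two (by linarith)
        nlinarith
      calc ENNReal.ofReal (s ^ (1/p) * rearr μ0 v s)
          ≤ ENNReal.ofReal (3 * (w ^ (1/p) * rearr μ0 v w)) := ofReal_le_ofReal hgw
        _ = ENNReal.ofReal 3 * ENNReal.ofReal (w ^ (1/p) * rearr μ0 v w) :=
            ofReal_mul (by norm_num)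
        _ ≤ ENNReal.ofReal 3 *
              (∫⁻ u in Ioo (0:ℝ) w, ENNReal.ofReal (rearr μ0 v u ^ p)) ^ (1/p) :=
            mul_le_mul' le_rfl (hXF w hw0)
        _ ≤ ENNReal.ofReal 3 *
              (ENNReal.ofReal (4 * (1 - Real.log w) ^ (-(1-1/p))) * smallNorm p v) :=
            mul_le_mul' le_rfl (hBbound w ⟨hw0, hw1⟩ (by rw [hLw]))
        _ ≤ ENNReal.ofReal 3 * (ENNReal.ofReal 4 * smallNorm p v) := by
            rw [hLw]
            exact mul_le_mul' le_rfl (mul_le_mul_left (ofReal_le_ofReal hc2) _)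
        _ = ENNReal.ofReal 12 * smallNorm p v := by
            rw [← mul_assoc, ← ofReal_mul (by norm_num : (0:ℝ) ≤ 3)]
            norm_num
    have hcomb := combine (X := ENNReal.ofReal (s ^ (1/p) * rearr μ0 v s)) ofReal_ne_top
      hα0.le hα2 (by norm_num : (0:ℝ) ≤ 12) (by norm_num : (0:ℝ) ≤ 12) hA' hB'
    have hle : (12:ℝ) ^ (1-α) * 12 ^ α ≤ 100 := by
      rw [← Real.rpow_add (by norm_num : (0:ℝ) < 12)]
      norm_num
    calc ENNReal.ofReal (s ^ (1/p) * rearr μ0 v s)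
        ≤ ENNReal.ofReal ((12:ℝ) ^ (1-α) * 12 ^ α) *
            (grandNorm p 1 v ^ (1-α) * smallNorm p v ^ α) := hcomb
      _ ≤ ENNReal.ofReal 100 * (grandNorm p 1 v ^ (1-α) * smallNorm p v ^ α) :=
          mul_le_mul_left (ofReal_le_ofReal hle) _
      _ = ENNReal.ofReal 100 * grandNorm p 1 v ^ (1-α) * smallNorm p v ^ α := by ring
end
end
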